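/- arXiv:1606.08251 — 2 statements merged into one kernel-verified Lean document; each statement's English description precedes it below -/
import Mathlib

section
/- Let Z ≥ 0 be a random variable such that E[Z^{2n}]^{1/(2n)} ≤ z√n for all integers n ≥ 1, for some z ≥ 0. Then for every n ≥ 1, E[Z^{2n}] ≤ (e/√2)·(e z²/2)^n · E[V^{2n}], where V is a standard centered Gaussian. -/
open MeasureTheory ProbabilityTheory Real Filter Nat
open scoped NNReal ENNReal


lemma gammaHalf (n : ℕ) : Real.Gamma (n + 1/2) = Real.sqrt π * (2*n)! / (4^n * n !) := by
  induction n with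
  | zero => rw [Nat.cast_zero, zero_add, Real.Gamma_one_half_eq]; simp
  | succ m ih =>
      have hne : ((m : ℝ) + 1/2) ≠ 0 := by positivity
      have : ((m : ℝ) + 1) + 1/2 = ((m : ℝ) + 1/2) + 1 := by ring
      rw [Nat.cast_succ, this, Real.Gamma_add_one hne, ih]
      have h2 : (2 * (m+1))! = (2*m+2) * ((2*m+1) * (2*m)!) := by
        have : 2 * (m+1) = (2*m+1) + 1 := by ring
        rw [this, Nat.factorial_succ]
        have : 2*m+1+1 = 2*m+2 := rfl
        rw [this, Nat.factorial_succ]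
      rw [h2, Nat.factorial_succ]
      push_cast
      have h4 : (4:ℝ)^(m+1) = 4 * 4^m := by ring
      rw [h4]
      field_simp
      ring

lemma gaussMoment (n : ℕ) :
    ∫ x, x ^ (2*n) ∂(gaussianReal 0 1) = (2*n)! / (2^n * n !) := by
  rw [gaussianReal_of_var_ne_zero 0 one_ne_zero]
  have hpdf : gaussianPDF 0 1 = fun x => ((Real.toNNReal (gaussianPDFReal 0 1 x) : ℝ≥0) : ℝ≥0∞) := rfl
  rw [hpdf, integral_withDensity_eq_integral_smul
    (measurable_gaussianPDFReal 0 1).real_toNNReal]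
  have h1 : ∀ x : ℝ, (Real.toNNReal (gaussianPDFReal 0 1 x) : ℝ≥0) • x ^ (2*n)
      = (Real.sqrt (2*π))⁻¹ * ((fun t => t ^ (2*n) * Real.exp (-(1/2) * t^2)) |x|) := by
    intro x
    rw [NNReal.smul_def, Real.coe_toNNReal _ (gaussianPDFReal_nonneg 0 1 x)]
    simp only [gaussianPDFReal, NNReal.coe_one, mul_one, sub_zero]
    rw [(even_two_mul n).pow_abs, sq_abs, smul_eq_mul]
    ring
  calc ∫ x, (Real.toNNReal (gaussianPDFReal 0 1 x) : ℝ≥0) • x ^ (2*n)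
      = ∫ x, (Real.sqrt (2*π))⁻¹ * ((fun t => t ^ (2*n) * Real.exp (-(1/2) * t^2)) |x|) := by
        exact integral_congr_ae (Filter.Eventually.of_forall h1)
    _ = (Real.sqrt (2*π))⁻¹ * (2 * ∫ x in Set.Ioi (0:ℝ), x ^ (2*n) * Real.exp (-(1/2) * x^2)) := by
        rw [integral_const_mul, integral_comp_abs (f := fun t => t ^ (2*n) * Real.exp (-(1/2) * t^2))]
    _ = (2*n)! / (2^n * n !) := by
        have key : ∫ x in Set.Ioi (0:ℝ), x ^ (2*n) * Real.exp (-(1/2) * x^2)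
            = (1/2 : ℝ) ^ (-((2*n : ℝ) + 1) / 2) * (1/2) * Real.Gamma (((2*n : ℝ) + 1) / 2) := by
          rw [← integral_rpow_mul_exp_neg_mul_rpow (p := 2) (q := (2*n : ℝ)) (by norm_num)
            (by have := Nat.cast_nonneg (α := ℝ) n; linarith) (by norm_num)]
          refine setIntegral_congr_fun measurableSet_Ioi (fun x hx => ?_)
          rw [show ((2*n : ℝ)) = ((2*n : ℕ) : ℝ) by push_cast; ring, Real.rpow_natCast,
            Real.rpow_two]
        rw [key]
        have hG : Real.Gamma (((2*n:ℝ) + 1) / 2) = Real.sqrt π * (2*n)! / (4^n * n !) := by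
          rw [show ((2*n:ℝ)+1)/2 = (n : ℝ) + 1/2 by push_cast; ring, gammaHalf]
        have hpow : (1/2 : ℝ) ^ (-((2*n : ℝ) + 1) / 2) = 2^n * Real.sqrt 2 := by
          have h1 : (1/2:ℝ) ^ (-((2*n : ℝ) + 1) / 2) = (2:ℝ) ^ ((n:ℝ) + 1/2) := by
            rw [one_div, Real.inv_rpow (by norm_num : (0:ℝ) ≤ 2),
              ← Real.rpow_neg (by norm_num : (0:ℝ) ≤ 2)]
            congr 1
            ring
          rw [h1, Real.rpow_add (by norm_num : (0:ℝ) < 2), Real.rpow_natCast,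
            ← Real.sqrt_eq_rpow]
        rw [hG, hpow]
        have h2pi : Real.sqrt (2*π) = Real.sqrt 2 * Real.sqrt π := Real.sqrt_mul (by norm_num) _
        rw [h2pi]
        have hs2 : Real.sqrt 2 > 0 := by positivity
        have hsp : Real.sqrt π > 0 := Real.sqrt_pos.2 pi_pos
        have h4 : (4:ℝ)^n = 2^n * 2^n := by rw [← mul_pow]; norm_num
        rw [h4]
        field_simp

lemma stirUpper (n : ℕ) (hn : 1 ≤ n) :
    (n ! : ℝ) ≤ (Real.exp 1 / Real.sqrt 2) * (Real.sqrt (2*n) * ((n:ℝ)/Real.exp 1)^n) := by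
  have hs : Stirling.stirlingSeq n ≤ Real.exp 1 / Real.sqrt 2 := by
    obtain ⟨m, rfl⟩ := Nat.exists_eq_add_of_le hn
    have := Stirling.stirlingSeq'_antitone (Nat.zero_le m)
    simpa [Function.comp, Stirling.stirlingSeq_one, Nat.add_comm] using this
  have hd : 0 < Real.sqrt (2*n) * ((n:ℝ)/Real.exp 1)^n := by
    have : (0:ℝ) < n := by exact_mod_cast hn
    positivity
  have := (div_le_iff₀ hd).1 hs
  simpa [Stirling.stirlingSeq] using this

lemma stirLower (n : ℕ) (hn : 1 ≤ n) :
    Real.sqrt (2*n) * ((n:ℝ)/Real.exp 1)^n ≤ (n ! : ℝ) := by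
  obtain ⟨m, rfl⟩ := Nat.exists_eq_add_of_le hn
  have hs : Real.sqrt π ≤ Stirling.stirlingSeq (m + 1) := by
    have ht : Tendsto (Stirling.stirlingSeq ∘ Nat.succ) atTop (nhds (Real.sqrt π)) :=
      (Filter.tendsto_add_atTop_iff_nat 1).2 Stirling.tendsto_stirlingSeq_sqrt_pi
    exact Stirling.stirlingSeq'_antitone.le_of_tendsto ht m
  have h1 : (1:ℝ) ≤ Stirling.stirlingSeq (m+1) := by
    refine le_trans ?_ hs
    rw [show (1:ℝ) = Real.sqrt 1 from (Real.sqrt_one).symm]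
    exact Real.sqrt_le_sqrt (by linarith [Real.pi_gt_three])
  have hd : 0 < Real.sqrt (2*(m+1:ℕ)) * (((m+1:ℕ):ℝ)/Real.exp 1)^(m+1) := by
    have : (0:ℝ) < ((m+1:ℕ):ℝ) := by positivity
    positivity
  have := (one_le_div hd).1 (by simpa [Stirling.stirlingSeq, Nat.add_comm] using h1)
  simpa [Nat.add_comm] using this

lemma coreIneq (n : ℕ) (hn : 1 ≤ n) :
    (n:ℝ)^n ≤ (Real.exp 1 / Real.sqrt 2) * (Real.exp 1/2)^n * ((2*n)! / (2^n * n !)) := by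
  have hN : (0:ℝ) < n := by exact_mod_cast hn
  have hup := stirUpper n hn
  have hlo := stirLower (2*n) (by omega)
  set E := Real.exp 1 with hEdef
  have hE : (0:ℝ) < E := Real.exp_pos 1
  have hlo' : Real.sqrt (4*(n:ℝ)) * ((2*(n:ℝ))/E)^(2*n) ≤ ((2*n)! : ℝ) := by
    convert hlo using 3 <;> push_cast <;> ring
  have key : (n:ℝ)^n * (2^n * (n ! : ℝ)) ≤
      (E / Real.sqrt 2) * (E/2)^n * ((2*n)! : ℝ) := by
    calc (n:ℝ)^n * (2^n * (n ! : ℝ))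
        = ((n:ℝ)^n * 2^n) * (n ! : ℝ) := by ring
      _ ≤ ((n:ℝ)^n * 2^n) * ((E / Real.sqrt 2) * (Real.sqrt (2*n) * ((n:ℝ)/E)^n)) :=
          mul_le_mul_of_nonneg_left hup (by positivity)
      _ = (E / Real.sqrt 2) * Real.sqrt (2*(n:ℝ)) * (2*(n:ℝ)^2/E)^n := by
          have hp : (2*(n:ℝ)^2/E)^n = (n:ℝ)^n * 2^n * ((n:ℝ)/E)^n := by
            rw [← mul_pow, ← mul_pow]
            congr 1
            field_simp
          rw [hp]; ring
      _ ≤ (E / Real.sqrt 2) * Real.sqrt (4*(n:ℝ)) * (2*(n:ℝ)^2/E)^n := by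
          have hmono : Real.sqrt (2*(n:ℝ)) ≤ Real.sqrt (4*(n:ℝ)) := Real.sqrt_le_sqrt (by linarith)
          have h1 : (0:ℝ) ≤ E / Real.sqrt 2 := by positivity
          exact mul_le_mul_of_nonneg_right (mul_le_mul_of_nonneg_left hmono h1) (by positivity)
      _ = (E / Real.sqrt 2) * (E/2)^n * (Real.sqrt (4*(n:ℝ)) * ((2*(n:ℝ))/E)^(2*n)) := by
          have hp : (E/2)^n * ((2*(n:ℝ))/E)^(2*n) = (2*(n:ℝ)^2/E)^n := by
            rw [pow_mul, ← mul_pow]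
            congr 1
            field_simp
          rw [← hp]; ring
      _ ≤ (E / Real.sqrt 2) * (E/2)^n * ((2*n)! : ℝ) :=
          mul_le_mul_of_nonneg_left hlo' (by positivity)
  have hpos : (0:ℝ) < 2^n * (n ! : ℝ) := by positivity
  rw [← mul_div_assoc, le_div_iff₀ hpos]
  linarith [key]

theorem stmt6 {Ω : Type*} [MeasureSpace Ω] [IsProbabilityMeasure (ℙ : Measure Ω)]
    (Z : Ω → ℝ) (hZpos : ∀ ω, 0 ≤ Z ω) (z : ℝ) (hz : 0 ≤ z)
    (hint : ∀ n : ℕ, Integrable (fun ω => Z ω ^ (2 * n)) ℙ)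
    (hmom : ∀ n : ℕ, 1 ≤ n →
      (∫ ω, Z ω ^ (2 * n) ∂ℙ) ^ ((1 : ℝ) / (2 * n)) ≤ z * Real.sqrt n) :
    ∀ n : ℕ, 1 ≤ n →
      ∫ ω, Z ω ^ (2 * n) ∂ℙ
        ≤ (Real.exp 1 / Real.sqrt 2) * (Real.exp 1 * z ^ 2 / 2) ^ n
            * ∫ x, x ^ (2 * n) ∂(gaussianReal 0 1) := by
  intro n hn
  have hN : (0:ℝ) < n := by exact_mod_cast hn
  set A := ∫ ω, Z ω ^ (2 * n) ∂ℙ with hAdef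
  have hA0 : 0 ≤ A := integral_nonneg (fun ω => pow_nonneg (hZpos ω) _)
  have h1 : A ≤ (z * Real.sqrt n) ^ (2*n) := by
    have hm := hmom n hn
    have h2n : (2*(n:ℝ)) ≠ 0 := by positivity
    have hid : A = (A ^ ((1:ℝ)/(2*(n:ℝ)))) ^ (2*n) := by
      rw [← Real.rpow_natCast (A ^ ((1:ℝ)/(2*(n:ℝ)))) (2*n), ← Real.rpow_mul hA0]
      push_cast
      rw [one_div, inv_mul_cancel₀ h2n, Real.rpow_one]
    calc A = (A ^ ((1:ℝ)/(2*(n:ℝ)))) ^ (2*n) := hid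
      _ ≤ (z * Real.sqrt n) ^ (2*n) :=
          pow_le_pow_left₀ (Real.rpow_nonneg hA0 _) hm (2*n)
  have h2 : (z * Real.sqrt n)^(2*n) = (z^2)^n * (n:ℝ)^n := by
    rw [mul_pow, pow_mul, pow_mul, Real.sq_sqrt hN.le]
  have h3 := coreIneq n hn
  have h4 : (z^2)^n * (n:ℝ)^n
      ≤ (z^2)^n * ((Real.exp 1 / Real.sqrt 2) * (Real.exp 1/2)^n * ((2*n)! / (2^n * n !))) :=
    mul_le_mul_of_nonneg_left h3 (by positivity)
  rw [gaussMoment n]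
  calc A ≤ (z * Real.sqrt n)^(2*n) := h1
    _ = (z^2)^n * (n:ℝ)^n := h2
    _ ≤ (z^2)^n * ((Real.exp 1 / Real.sqrt 2) * (Real.exp 1/2)^n * ((2*n)! / (2^n * n !))) := h4
    _ = (Real.exp 1 / Real.sqrt 2) * (Real.exp 1 * z ^ 2 / 2) ^ n * (((2*n)! : ℝ) / (2^n * n !)) := by
        rw [show Real.exp 1 * z^2/2 = (Real.exp 1/2) * z^2 by ring, mul_pow]
        ring
end

section
/- Let Z ≥ 0 satisfy E[Z^{2n}]^{1/(2n)} ≤ z√n for all n ≥ 1. Then for any ε ∈ (0,1] and t = (1-ε)/(z² e), E[exp(t Z²)] ≤ (e/√2)·exp((1-ε²)/(4ε)). -/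
open MeasureTheory ProbabilityTheory

-- the pure calculus inequality
lemma aux_log_ineq (ε : ℝ) (hε0 : 0 < ε) (hε1 : ε ≤ 1) :
    Real.log 2 / 2 - Real.log ε ≤ 1 + (1 - ε ^ 2) / (4 * ε) := by
  have hl2 : Real.log 2 < 0.6931471808 := Real.log_two_lt_d9
  have h4 : (0:ℝ) < 4 * ε := by linarith
  have h1 : Real.log ((4*ε)⁻¹) ≤ (4*ε)⁻¹ - 1 := Real.log_le_sub_one_of_pos (by positivity)
  have h2 : Real.log (4*ε) = Real.log 4 + Real.log ε := Real.log_mul (by norm_num) hε0.ne'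
  have h3 : Real.log 4 = 2 * Real.log 2 := by
    rw [show (4:ℝ) = 2^2 by norm_num, Real.log_pow]; push_cast; ring
  rw [Real.log_inv, h2, h3] at h1
  have hinv : (4*ε)⁻¹ * (4*ε) = 1 := inv_mul_cancel₀ h4.ne'
  rw [← sub_le_iff_le_add', le_div_iff₀ h4]
  nlinarith [mul_le_mul_of_nonneg_right h1 h4.le, mul_pos hε0 hε0]

lemma aux_calc (ε : ℝ) (hε0 : 0 < ε) (hε1 : ε ≤ 1) :
    1 / ε ≤ (Real.exp 1 / Real.sqrt 2) * Real.exp ((1 - ε ^ 2) / (4 * ε)) := by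
  have hs2 : (0:ℝ) < Real.sqrt 2 := by positivity
  have key := aux_log_ineq ε hε0 hε1
  have h1 : Real.sqrt 2 * (1/ε) = Real.exp (Real.log 2 / 2 - Real.log ε) := by
    rw [Real.exp_sub, Real.exp_log hε0, ← Real.log_sqrt (by norm_num : (0:ℝ) ≤ 2),
      Real.exp_log hs2]
    ring
  have h2 : Real.sqrt 2 * (1/ε) ≤ Real.exp (1 + (1 - ε^2)/(4*ε)) := by
    rw [h1]; exact Real.exp_le_exp.2 key
  rw [Real.exp_add] at h2
  rw [div_mul_eq_mul_div, le_div_iff₀ hs2]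
  linarith [h2]


-- n^n ≤ exp n * n!
lemma aux_pow_fact (n : ℕ) : (n:ℝ)^n ≤ Real.exp n * n.factorial := by
  have h := Real.sum_le_exp_of_nonneg (x := (n:ℝ)) (Nat.cast_nonneg n) (n+1)
  have h2 : (n:ℝ)^n / n.factorial ≤ Real.exp n := by
    refine le_trans ?_ h
    exact Finset.single_le_sum (f := fun i => (n:ℝ)^i / i.factorial)
      (fun i _ => by positivity) (Finset.self_mem_range_succ n)
  have hf : (0:ℝ) < n.factorial := by positivity
  calc (n:ℝ)^n = (n:ℝ)^n / n.factorial * n.factorial := by field_simp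
    _ ≤ Real.exp n * n.factorial := by
        exact mul_le_mul_of_nonneg_right h2 hf.le

-- pointwise: t^n x^(2n)/n! ≤ exp (t x^2) for t, x ≥ 0
lemma aux_pointwise (t x : ℝ) (ht : 0 ≤ t) (hx : 0 ≤ x) (n : ℕ) :
    t^n * x^(2*n) / n.factorial ≤ Real.exp (t * x^2) := by
  have h0 : 0 ≤ t * x^2 := by positivity
  have h := Real.sum_le_exp_of_nonneg h0 (n+1)
  refine le_trans (le_of_eq ?_) (le_trans (Finset.single_le_sum
    (f := fun i => (t*x^2)^i / i.factorial) (fun i _ => by positivity)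
    (Finset.self_mem_range_succ n)) h)
  simp only [mul_pow, pow_mul]


theorem stmt7 {Ω : Type*} [MeasureSpace Ω] [IsProbabilityMeasure (ℙ : Measure Ω)]
    (Z : Ω → ℝ) (hZpos : ∀ ω, 0 ≤ Z ω) (z : ℝ) (hz : 0 < z)
    (hmom : ∀ n : ℕ, 1 ≤ n →
      (∫ ω, Z ω ^ (2 * n) ∂ℙ) ^ ((1 : ℝ) / (2 * n)) ≤ z * Real.sqrt n)
    (ε : ℝ) (hε : ε ∈ Set.Ioc (0 : ℝ) 1)
    (hint : Integrable (fun ω => Real.exp ((1 - ε) / (z ^ 2 * Real.exp 1) * Z ω ^ 2)) ℙ) :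
    ∫ ω, Real.exp ((1 - ε) / (z ^ 2 * Real.exp 1) * Z ω ^ 2) ∂ℙ
      ≤ (Real.exp 1 / Real.sqrt 2) * Real.exp ((1 - ε ^ 2) / (4 * ε)) := by
  obtain ⟨hε0, hε1⟩ := hε
  set t : ℝ := (1 - ε) / (z ^ 2 * Real.exp 1) with ht
  have hkey : ∫ ω, Real.exp (t * Z ω ^ 2) ∂ℙ ≤ 1 / ε := by
    rcases eq_or_lt_of_le hε1 with h1 | h1
    · subst h1
      have ht0 : t = 0 := by rw [ht]; simp
      simp [ht0]
    · -- main case: ε < 1, t > 0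
      have ht0 : 0 < t := div_pos (by linarith) (by positivity)
      -- measurability
      have hexpm : AEMeasurable (fun ω => Real.exp (t * Z ω ^ 2)) ℙ :=
        hint.aemeasurable
      have hZ2m : AEMeasurable (fun ω => Z ω ^ 2) ℙ := by
        have heq : (fun ω => Z ω ^ 2) =
            fun ω => Real.log (Real.exp (t * Z ω ^ 2)) / t := by
          funext ω; rw [Real.log_exp]; field_simp
        rw [heq]
        exact (Real.measurable_log.comp_aemeasurable hexpm).div_const t
      have hZm : ∀ n : ℕ, AEMeasurable (fun ω => Z ω ^ (2*n)) ℙ := by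
        intro n
        have heq : (fun ω => Z ω ^ (2*n)) = fun ω => (Z ω ^ 2) ^ n := by
          funext ω; rw [← pow_mul]
        rw [heq]; exact hZ2m.pow_const n
      -- finiteness of the exponential lintegral
      have hfin : ∫⁻ ω, ENNReal.ofReal (Real.exp (t * Z ω ^ 2)) ∂ℙ < ⊤ := by
        have h := hint.hasFiniteIntegral
        rwa [hasFiniteIntegral_iff_ofReal
          (ae_of_all _ fun ω => (Real.exp_pos _).le)] at h
      -- each moment lintegral is finite
      have hlfin : ∀ n : ℕ, ∫⁻ ω, ENNReal.ofReal (Z ω ^ (2*n)) ∂ℙ < ⊤ := by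
        intro n
        have hb : ∀ ω, ENNReal.ofReal (Z ω ^ (2*n)) ≤
            ENNReal.ofReal ((n.factorial : ℝ) / t^n) *
              ENNReal.ofReal (Real.exp (t * Z ω ^ 2)) := by
          intro ω
          rw [← ENNReal.ofReal_mul (div_pos (Nat.cast_pos.2 n.factorial_pos) (pow_pos ht0 n)).le]
          apply ENNReal.ofReal_le_ofReal
          have hp := aux_pointwise t (Z ω) ht0.le (hZpos ω) n
          have hc : (0:ℝ) < (n.factorial : ℝ) / t^n := div_pos (Nat.cast_pos.2 n.factorial_pos) (pow_pos ht0 n)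
          calc Z ω ^ (2*n) = (n.factorial : ℝ)/t^n * (t^n * Z ω^(2*n) / n.factorial) := by
                field_simp
            _ ≤ (n.factorial : ℝ)/t^n * Real.exp (t * Z ω ^ 2) :=
                mul_le_mul_of_nonneg_left hp hc.le
        calc ∫⁻ ω, ENNReal.ofReal (Z ω ^ (2*n)) ∂ℙ
            ≤ ∫⁻ ω, ENNReal.ofReal ((n.factorial : ℝ) / t^n) *
                ENNReal.ofReal (Real.exp (t * Z ω ^ 2)) ∂ℙ := lintegral_mono hb
          _ = ENNReal.ofReal ((n.factorial : ℝ) / t^n) *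
                ∫⁻ ω, ENNReal.ofReal (Real.exp (t * Z ω ^ 2)) ∂ℙ :=
              lintegral_const_mul' _ _ ENNReal.ofReal_ne_top
          _ < ⊤ := ENNReal.mul_lt_top ENNReal.ofReal_lt_top hfin
      -- integrability of moments
      have hintg : ∀ n : ℕ, Integrable (fun ω => Z ω ^ (2*n)) ℙ := by
        intro n
        refine ⟨(hZm n).aestronglyMeasurable, ?_⟩
        rw [hasFiniteIntegral_iff_ofReal (ae_of_all _ fun ω => pow_nonneg (hZpos ω) _)]
        exact hlfin n
      -- moment bound
      have hmomn : ∀ n : ℕ, 1 ≤ n →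
          ∫ ω, Z ω ^ (2*n) ∂ℙ ≤ z^(2*n) * (n:ℝ)^n := by
        intro n hn
        have h := hmom n hn
        have hI : 0 ≤ ∫ ω, Z ω ^ (2*n) ∂ℙ :=
          integral_nonneg (fun ω => pow_nonneg (hZpos ω) _)
        have hzs : (0:ℝ) ≤ z * Real.sqrt n := mul_nonneg hz.le (Real.sqrt_nonneg _)
        have hIp : (0:ℝ) ≤ (∫ ω, Z ω ^ (2*n) ∂ℙ) ^ ((1:ℝ)/(2*n)) :=
          Real.rpow_nonneg hI _
        have h2 : ((∫ ω, Z ω ^ (2*n) ∂ℙ) ^ ((1:ℝ)/(2*n)))^(2*n) ≤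
            (z * Real.sqrt n)^(2*n) := pow_le_pow_left₀ hIp h _
        have h3 : ((∫ ω, Z ω ^ (2*n) ∂ℙ) ^ ((1:ℝ)/(2*n)))^(2*n) =
            ∫ ω, Z ω ^ (2*n) ∂ℙ := by
          rw [← Real.rpow_natCast ((∫ ω, Z ω ^ (2*n) ∂ℙ) ^ ((1:ℝ)/(2*n))) (2*n),
            ← Real.rpow_mul hI]
          have hne : (1:ℝ)/(2*(n:ℝ)) * ((2*n : ℕ) : ℝ) = 1 := by
            have hn0 : (0:ℝ) < (n:ℝ) := Nat.cast_pos.2 hn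
            push_cast; field_simp
          rw [hne, Real.rpow_one]
        have h4 : (z * Real.sqrt n)^(2*n) = z^(2*n) * (n:ℝ)^n := by
          rw [mul_pow, pow_mul z]
          congr 1
          rw [pow_mul, Real.sq_sqrt (Nat.cast_nonneg n)]
        rw [h3, h4] at h2
        exact h2
      -- per-term bound in ENNReal
      have hterm : ∀ n : ℕ,
          ENNReal.ofReal (t^n / n.factorial) *
              ∫⁻ ω, ENNReal.ofReal (Z ω ^ (2*n)) ∂ℙ ≤ ENNReal.ofReal ((1-ε)^n) := by
        intro n
        rcases Nat.eq_zero_or_pos n with rfl | hn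
        · simp
        · have hIeq : ∫⁻ ω, ENNReal.ofReal (Z ω ^ (2*n)) ∂ℙ
              = ENNReal.ofReal (∫ ω, Z ω ^ (2*n) ∂ℙ) :=
            (ofReal_integral_eq_lintegral_ofReal (hintg n)
              (ae_of_all _ fun ω => pow_nonneg (hZpos ω) _)).symm
          have hc : (0:ℝ) ≤ t^n / n.factorial :=
            div_nonneg (pow_nonneg ht0.le n) (Nat.cast_nonneg _)
          rw [hIeq, ← ENNReal.ofReal_mul hc]
          apply ENNReal.ofReal_le_ofReal
          have h2 := hmomn n hn
          have he1 : (0:ℝ) < 1 - ε := by linarith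
          calc t^n / n.factorial * ∫ ω, Z ω ^ (2*n) ∂ℙ
              ≤ t^n / n.factorial * (z^(2*n) * (n:ℝ)^n) :=
                mul_le_mul_of_nonneg_left h2 hc
            _ = (1-ε)^n * ((n:ℝ)^n / (Real.exp n * n.factorial)) := by
                rw [ht, div_pow, mul_pow, ← pow_mul z, Real.exp_one_pow]
                have hzn : (z:ℝ)^(2*n) ≠ 0 := by positivity
                have hen : Real.exp n ≠ 0 := (Real.exp_pos _).ne'
                have hfn : ((n.factorial : ℝ)) ≠ 0 := by positivity
                field_simp
            _ ≤ (1-ε)^n * 1 := by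
                refine mul_le_mul_of_nonneg_left ?_ (pow_nonneg he1.le n)
                rw [div_le_one (by positivity)]
                exact aux_pow_fact n
            _ = (1-ε)^n := mul_one _
      -- the exponential as a series, in ENNReal
      have hexp_eq : ∀ ω, ENNReal.ofReal (Real.exp (t * Z ω ^ 2)) =
          ∑' n : ℕ, ENNReal.ofReal (t^n * Z ω ^ (2*n) / n.factorial) := by
        intro ω
        have hfe : (fun n : ℕ => t^n * Z ω ^ (2*n) / n.factorial)
            = fun n : ℕ => (t * Z ω ^ 2)^n / n.factorial := by
          funext n; rw [mul_pow, pow_mul]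
        have hsum : Real.exp (t * Z ω ^ 2)
            = ∑' n : ℕ, t^n * Z ω ^ (2*n) / n.factorial := by
          rw [Real.exp_eq_exp_ℝ, NormedSpace.exp_eq_tsum_div, hfe]
        rw [hsum]
        refine ENNReal.ofReal_tsum_of_nonneg (fun n => ?_) ?_
        · exact div_nonneg (mul_nonneg (pow_nonneg ht0.le _)
            (pow_nonneg (hZpos ω) _)) (Nat.cast_nonneg _)
        · rw [hfe]; exact Real.summable_pow_div_factorial _
      have hts : ∀ n : ℕ, AEMeasurable
          (fun ω => ENNReal.ofReal (t^n * Z ω ^ (2*n) / n.factorial)) ℙ :=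
        fun n => (((hZm n).const_mul (t^n)).div_const _).ennreal_ofReal
      have hmain : ∫⁻ ω, ENNReal.ofReal (Real.exp (t * Z ω ^ 2)) ∂ℙ
          ≤ ENNReal.ofReal (1/ε) := by
        have he1 : (0:ℝ) ≤ 1 - ε := by linarith
        have he2 : 1 - ε < 1 := by linarith
        calc ∫⁻ ω, ENNReal.ofReal (Real.exp (t * Z ω ^ 2)) ∂ℙ
            = ∑' n : ℕ, ∫⁻ ω, ENNReal.ofReal (t^n * Z ω ^ (2*n) / n.factorial) ∂ℙ := by
              simp_rw [hexp_eq]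
              exact lintegral_tsum hts
          _ = ∑' n : ℕ, ENNReal.ofReal (t^n / n.factorial) *
                ∫⁻ ω, ENNReal.ofReal (Z ω ^ (2*n)) ∂ℙ := by
              congr 1; funext n
              rw [← lintegral_const_mul' _ _ ENNReal.ofReal_ne_top]
              congr 1; funext ω
              rw [← ENNReal.ofReal_mul (div_nonneg (pow_nonneg ht0.le _)
                (Nat.cast_nonneg _))]
              congr 1; ring
          _ ≤ ∑' n : ℕ, ENNReal.ofReal ((1-ε)^n) := ENNReal.tsum_le_tsum hterm
          _ = ENNReal.ofReal (∑' n : ℕ, (1-ε)^n) :=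
              (ENNReal.ofReal_tsum_of_nonneg (fun n => pow_nonneg he1 n)
                (summable_geometric_of_lt_one he1 he2)).symm
          _ = ENNReal.ofReal (1/ε) := by
              rw [tsum_geometric_of_lt_one he1 he2]
              congr 1
              rw [one_div]
              congr 1
              ring
      rw [integral_eq_lintegral_of_nonneg_ae (ae_of_all _ fun ω => (Real.exp_pos _).le)
        hint.aestronglyMeasurable]
      have hm := ENNReal.toReal_mono ENNReal.ofReal_ne_top hmain
      rwa [ENNReal.toReal_ofReal (by positivity)] at hm

  calc ∫ ω, Real.exp (t * Z ω ^ 2) ∂ℙ ≤ 1/ε := hkey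
    _ ≤ _ := aux_calc ε hε0 hε1
end
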